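/- Suppose α₁ is irrational, θ = (p₁/q₁)·α₁ + p₂/q₂ where p₁, p₂ ∈ ℤ and q₁, q₂ are positive integers, and α₂ = p₃/q₃ with p₃ ∈ ℤ and q₃ a positive integer. Then for every s ∈ ℝ and every r₂ ∈ ℕ, the point (r₂ − (p₁/q₁)·s, s mod 1, r₂·α₂ mod 1) lies in the closure of S. -/

import Mathlib

/-- The set `S = { (m − k·θ, k·α₁ mod 1, m·α₂ mod 1) : k, m ∈ ℕ }` in
`ℝ × (ℝ/ℤ) × (ℝ/ℤ)`. -/
def Sset (θ α₁ α₂ : ℝ) : Set (ℝ × AddCircle (1 : ℝ) × AddCircle (1 : ℝ)) :=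
  {x | ∃ k m : ℕ, x = ((m : ℝ) - (k : ℝ) * θ,
    (((k : ℝ) * α₁ : ℝ) : AddCircle (1 : ℝ)),
    (((m : ℝ) * α₂ : ℝ) : AddCircle (1 : ℝ)))}

/-- Adding an integer does not change the class in `AddCircle 1`. -/
lemma coe_add_int_aux (x : ℝ) (z : ℤ) :
    ((x + z : ℝ) : AddCircle (1 : ℝ)) = (x : AddCircle (1 : ℝ)) := by
  have h0 : ((z : ℝ) : AddCircle (1 : ℝ)) = 0 := by
    rw [AddCircle.coe_eq_zero_iff]
    exact ⟨z, by simp⟩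
  calc ((x + z : ℝ) : AddCircle (1 : ℝ))
      = (x : AddCircle (1 : ℝ)) + ((z : ℝ) : AddCircle (1 : ℝ)) :=
        QuotientAddGroup.mk_add _ _ _
    _ = (x : AddCircle (1 : ℝ)) := by rw [h0, add_zero]

/-- The set `{ (n·β + m : n, m ∈ ℤ) }` is dense in `ℝ` for irrational `β`. -/
lemma dense_int_combo (β : ℝ) (h : Irrational β) :
    Dense (Set.range fun p : ℤ × ℤ => (p.1 : ℝ) * β + (p.2 : ℝ)) := by
  rcases (AddSubgroup.closure ({1, β} : Set ℝ)).dense_or_cyclic with hd | ⟨a, ha⟩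
  · refine hd.mono ?_
    intro x hx
    induction hx using AddSubgroup.closure_induction with
    | mem y hy =>
      rcases hy with hy | hy
      · exact ⟨(0, 1), by simp [hy]⟩
      · exact ⟨(1, 0), by simp [Set.mem_singleton_iff.mp hy]⟩
    | zero => exact ⟨(0, 0), by simp⟩
    | add y z _ _ hy hz =>
      obtain ⟨⟨a1, a2⟩, rfl⟩ := hy
      obtain ⟨⟨b1, b2⟩, rfl⟩ := hz
      exact ⟨(a1 + b1, a2 + b2), by push_cast; ring⟩
    | neg y _ hy =>
      obtain ⟨⟨a1, a2⟩, rfl⟩ := hy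
      exact ⟨(-a1, -a2), by push_cast; ring⟩
  · exfalso
    have h1 : (1 : ℝ) ∈ AddSubgroup.closure ({1, β} : Set ℝ) :=
      AddSubgroup.subset_closure (by simp)
    have hb : β ∈ AddSubgroup.closure ({1, β} : Set ℝ) :=
      AddSubgroup.subset_closure (by simp)
    rw [ha, AddSubgroup.mem_closure_singleton] at h1 hb
    obtain ⟨m, hm⟩ := h1
    obtain ⟨n, hn⟩ := hb
    have hm' : (m : ℝ) * a = 1 := by rw [← hm]; simp [zsmul_eq_mul]
    have hn' : (n : ℝ) * a = β := by rw [← hn]; simp [zsmul_eq_mul]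
    have hmne : (m : ℝ) ≠ 0 := by
      intro h0
      rw [h0, zero_mul] at hm'
      exact one_ne_zero hm'.symm
    have ha' : a = 1 / (m : ℝ) := eq_one_div_of_mul_eq_one_left (by linarith [hm'] : a * (m : ℝ) = 1)
    have : β = ((n / m : ℚ) : ℝ) := by
      push_cast
      rw [← hn', ha']
      field_simp
    exact h ⟨(n / m : ℚ), this.symm⟩

/-- Natural multiples of an irrational number are dense in the circle. -/
lemma denseRange_nat_mul (β : ℝ) (h : Irrational β) :
    DenseRange (fun n : ℕ => (((n : ℝ) * β : ℝ) : AddCircle (1 : ℝ))) := by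
  have hz : DenseRange (fun n : ℤ => n • ((β : ℝ) : AddCircle (1 : ℝ))) := by
    have hcont : Continuous ((↑·) : ℝ → AddCircle (1 : ℝ)) := AddCircle.continuous_mk' 1
    have hsurj : DenseRange ((↑·) : ℝ → AddCircle (1 : ℝ)) :=
      QuotientAddGroup.mk_surjective.denseRange
    have himg := hsurj.dense_image hcont (dense_int_combo β h)
    refine himg.mono ?_
    rintro x ⟨y, ⟨⟨n, m⟩, rfl⟩, rfl⟩
    refine ⟨n, ?_⟩
    simp only
    rw [coe_add_int_aux ((n : ℝ) * β) m]
    rw [← QuotientAddGroup.mk_zsmul, zsmul_eq_mul]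
  have hn := denseRange_zsmul_iff_nsmul.mp hz
  have hfun : (fun n : ℕ => (((n : ℝ) * β : ℝ) : AddCircle (1 : ℝ)))
      = fun n : ℕ => n • ((β : ℝ) : AddCircle (1 : ℝ)) := by
    funext n
    rw [← QuotientAddGroup.mk_nsmul, nsmul_eq_mul]
  rw [hfun]
  exact hn

/-- Approximation lemma: multiples `n·β`, `n ≥ M`, come within `ε` of `t` modulo 1. -/
lemma approx_aux (β : ℝ) (h : Irrational β) (t : ℝ) (M : ℕ) {ε : ℝ} (hε : 0 < ε) :
    ∃ n : ℕ, M ≤ n ∧ ∃ ℓ : ℤ, |(n : ℝ) * β - t - ℓ| < ε := by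
  obtain ⟨n₀, hn₀⟩ := (denseRange_nat_mul β h).exists_dist_lt
    (((t - (M : ℝ) * β : ℝ)) : AddCircle (1 : ℝ)) hε
  refine ⟨n₀ + M, Nat.le_add_left _ _, round (((n₀ + M : ℕ) : ℝ) * β - t), ?_⟩
  rw [dist_eq_norm] at hn₀
  have e1 : ((t - (M : ℝ) * β : ℝ) : AddCircle (1 : ℝ)) - (((n₀ : ℝ) * β : ℝ) : AddCircle (1 : ℝ))
      = ((-(((n₀ + M : ℕ) : ℝ) * β - t) : ℝ) : AddCircle (1 : ℝ)) := by
    rw [← QuotientAddGroup.mk_sub]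
    congr 1
    push_cast
    ring
  rw [e1, QuotientAddGroup.mk_neg, norm_neg, AddCircle.norm_eq] at hn₀
  simpa using hn₀

theorem stmt11 (θ α₁ α₂ : ℝ) (hθ : 0 < θ)
    (hα₁ : α₁ ∈ Set.Ioo (0 : ℝ) (1 / 2)) (hα₂ : α₂ ∈ Set.Ioo (0 : ℝ) (1 / 2))
    (hirr : Irrational α₁)
    (p₁ p₂ p₃ : ℤ) (q₁ q₂ q₃ : ℕ) (hq₁ : 0 < q₁) (hq₂ : 0 < q₂) (hq₃ : 0 < q₃)
    (hθeq : θ = (p₁ : ℝ) / (q₁ : ℝ) * α₁ + (p₂ : ℝ) / (q₂ : ℝ))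
    (hα₂eq : α₂ = (p₃ : ℝ) / (q₃ : ℝ)) :
    ∀ (s : ℝ) (r₂ : ℕ),
      ((r₂ : ℝ) - (p₁ : ℝ) / (q₁ : ℝ) * s,
        ((s : ℝ) : AddCircle (1 : ℝ)),
        (((r₂ : ℝ) * α₂ : ℝ) : AddCircle (1 : ℝ))) ∈ closure (Sset θ α₁ α₂) := by
  intro s r₂
  rw [Metric.mem_closure_iff]
  intro ε hε
  have hq₁R : (0 : ℝ) < (q₁ : ℝ) := by exact_mod_cast hq₁
  have hq₂R : (0 : ℝ) < (q₂ : ℝ) := by exact_mod_cast hq₂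
  have hq₃R : (0 : ℝ) < (q₃ : ℝ) := by exact_mod_cast hq₃
  obtain ⟨β, hβdef⟩ : ∃ x : ℝ, x = (q₂ : ℝ) * α₁ := ⟨_, rfl⟩
  have hβirr : Irrational β := hβdef ▸ hirr.natCast_mul hq₂.ne'
  obtain ⟨t, htdef⟩ : ∃ x : ℝ, x = s / ((q₁ : ℝ) * (q₃ : ℝ)) := ⟨_, rfl⟩
  obtain ⟨C, hCdef⟩ : ∃ x : ℝ, x = (q₁ : ℝ) * (q₃ : ℝ) + |(q₃ : ℝ) * (p₁ : ℝ)| + 1 := ⟨_, rfl⟩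
  have hCpos : 0 < C := by rw [hCdef]; positivity
  have hε'pos : (0 : ℝ) < min 1 (ε / C) := lt_min one_pos (div_pos hε hCpos)
  obtain ⟨B, hBdef⟩ : ∃ x : ℝ, x = |(p₁ : ℝ) / (q₁ : ℝ) * s| + |(q₃ : ℝ) * (p₁ : ℝ)| := ⟨_, rfl⟩
  have hNθ : (0 : ℝ) < ((q₁ * q₂ * q₃ : ℕ) : ℝ) * θ := by
    apply mul_pos _ hθ
    exact_mod_cast Nat.pos_of_ne_zero (by positivity)
  obtain ⟨M, hM⟩ := exists_nat_gt (B / (((q₁ * q₂ * q₃ : ℕ) : ℝ) * θ))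
  have hBM : B < ((q₁ * q₂ * q₃ : ℕ) : ℝ) * θ * M := by
    rw [div_lt_iff₀ hNθ] at hM
    linarith
  obtain ⟨n, hnM, ℓ, hδ⟩ := approx_aux β hβirr t M hε'pos
  obtain ⟨δ, hδdef⟩ : ∃ x : ℝ, x = (n : ℝ) * β - t - (ℓ : ℝ) := ⟨_, rfl⟩
  rw [← hδdef] at hδ
  have hδ1 : |δ| ≤ 1 := le_trans hδ.le (min_le_left _ _)
  have hδε : |δ| < ε / C := lt_of_lt_of_le hδ (min_le_right _ _)
  have hδ0 : 0 ≤ |δ| := abs_nonneg _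
  have hnβ : (n : ℝ) * β = t + ℓ + δ := by rw [hδdef]; ring
  obtain ⟨k, hkdef⟩ : ∃ x : ℕ, x = q₁ * q₂ * q₃ * n := ⟨_, rfl⟩
  obtain ⟨j, hjdef⟩ : ∃ x : ℤ, x = (n : ℤ) * q₁ * p₂ + p₁ * ℓ := ⟨_, rfl⟩
  obtain ⟨mz, hmzdef⟩ : ∃ x : ℤ, x = (r₂ : ℤ) + q₃ * j := ⟨_, rfl⟩
  have hkR : (k : ℝ) = (q₁ : ℝ) * (q₂ : ℝ) * (q₃ : ℝ) * (n : ℝ) := by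
    rw [hkdef]; push_cast; ring
  have hkα : (k : ℝ) * α₁ = (q₁ : ℝ) * (q₃ : ℝ) * ((n : ℝ) * β) := by
    rw [hkR, hβdef]; ring
  -- key identity for the first coordinate
  have H1 : (mz : ℝ) - (k : ℝ) * θ
      = (r₂ : ℝ) - (p₁ : ℝ) / (q₁ : ℝ) * s - (q₃ : ℝ) * (p₁ : ℝ) * δ := by
    have hmzR : (mz : ℝ) = (r₂ : ℝ) + (q₃ : ℝ) * ((n : ℝ) * (q₁ : ℝ) * (p₂ : ℝ)
        + (p₁ : ℝ) * (ℓ : ℝ)) := by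
      rw [hmzdef, hjdef]; push_cast; ring
    have hkθ : (k : ℝ) * θ = (p₁ : ℝ) * (q₃ : ℝ) * ((n : ℝ) * β)
        + (q₁ : ℝ) * (q₃ : ℝ) * (p₂ : ℝ) * (n : ℝ) := by
      rw [hθeq, hkR, hβdef]
      field_simp
    rw [hmzR, hkθ, hnβ, htdef]
    field_simp
    ring
  -- `mz` is nonnegative
  have hmz0 : 0 ≤ mz := by
    have habs1 : -|(p₁ : ℝ) / (q₁ : ℝ) * s| ≤ -((p₁ : ℝ) / (q₁ : ℝ) * s) := by
      rw [neg_le_neg_iff]; exact le_abs_self _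
    have habs2 : |(q₃ : ℝ) * (p₁ : ℝ) * δ| ≤ |(q₃ : ℝ) * (p₁ : ℝ)| := by
      rw [abs_mul]
      exact mul_le_of_le_one_right (abs_nonneg _) hδ1
    have habs2' : -|(q₃ : ℝ) * (p₁ : ℝ)| ≤ -((q₃ : ℝ) * (p₁ : ℝ) * δ) := by
      have h' := le_abs_self ((q₃ : ℝ) * (p₁ : ℝ) * δ)
      linarith
    have hkM : ((q₁ * q₂ * q₃ * M : ℕ) : ℝ) ≤ (k : ℝ) := by
      rw [hkdef]
      exact_mod_cast Nat.mul_le_mul_left (q₁ * q₂ * q₃) hnM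
    have hkθM : ((q₁ * q₂ * q₃ : ℕ) : ℝ) * θ * (M : ℝ) ≤ (k : ℝ) * θ := by
      have h1 : ((q₁ * q₂ * q₃ : ℕ) : ℝ) * θ * (M : ℝ) = ((q₁ * q₂ * q₃ * M : ℕ) : ℝ) * θ := by
        push_cast; ring
      rw [h1]
      exact mul_le_mul_of_nonneg_right hkM hθ.le
    have hr₂0 : (0 : ℝ) ≤ (r₂ : ℝ) := Nat.cast_nonneg _
    have : (0 : ℝ) ≤ (mz : ℝ) := by
      have hmzR' : (mz : ℝ) = (k : ℝ) * θ
          + ((r₂ : ℝ) - (p₁ : ℝ) / (q₁ : ℝ) * s - (q₃ : ℝ) * (p₁ : ℝ) * δ) := by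
        linarith [H1]
      rw [hBdef] at hBM
      linarith [hmzR', hkθM, hBM, habs1, habs2', hr₂0]
    exact_mod_cast this
  obtain ⟨m, hmdef⟩ : ∃ x : ℕ, x = mz.toNat := ⟨_, rfl⟩
  have hmR : (m : ℝ) = (mz : ℝ) := by
    rw [hmdef]
    exact_mod_cast congrArg (Int.cast : ℤ → ℝ) (Int.toNat_of_nonneg hmz0)
  refine ⟨((m : ℝ) - (k : ℝ) * θ, (((k : ℝ) * α₁ : ℝ) : AddCircle (1 : ℝ)),
    (((m : ℝ) * α₂ : ℝ) : AddCircle (1 : ℝ))), ⟨k, m, rfl⟩, ?_⟩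
  have hCabs : |(q₃ : ℝ) * (p₁ : ℝ)| + 1 ≤ C := by
    rw [hCdef]; linarith [mul_pos hq₁R hq₃R]
  rw [Prod.dist_eq]
  refine max_lt ?_ ?_
  · -- first coordinate
    rw [Real.dist_eq]
    have : (m : ℝ) - (k : ℝ) * θ
        = (r₂ : ℝ) - (p₁ : ℝ) / (q₁ : ℝ) * s - (q₃ : ℝ) * (p₁ : ℝ) * δ := by
      rw [hmR]; exact H1
    rw [this]
    have : (r₂ : ℝ) - (p₁ : ℝ) / (q₁ : ℝ) * s
        - ((r₂ : ℝ) - (p₁ : ℝ) / (q₁ : ℝ) * s - (q₃ : ℝ) * (p₁ : ℝ) * δ)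
        = (q₃ : ℝ) * (p₁ : ℝ) * δ := by ring
    rw [this, abs_mul]
    calc |(q₃ : ℝ) * (p₁ : ℝ)| * |δ| ≤ |(q₃ : ℝ) * (p₁ : ℝ)| * (ε / C) :=
          mul_le_mul_of_nonneg_left hδε.le (abs_nonneg _)
      _ < C * (ε / C) := by
          apply mul_lt_mul_of_pos_right _ (div_pos hε hCpos)
          linarith [hCabs]
      _ = ε := by field_simp
  rw [Prod.dist_eq]
  refine max_lt ?_ ?_
  · -- second coordinate
    have hkα2 : (k : ℝ) * α₁ = s + (q₁ : ℝ) * (q₃ : ℝ) * δ + (((q₁ : ℤ) * (q₃ : ℤ) * ℓ : ℤ) : ℝ) := by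
      rw [hkα, hnβ, htdef]
      push_cast
      field_simp
      ring
    have hcoe : (((k : ℝ) * α₁ : ℝ) : AddCircle (1 : ℝ))
        = ((s + (q₁ : ℝ) * (q₃ : ℝ) * δ : ℝ) : AddCircle (1 : ℝ)) := by
      rw [hkα2]
      exact coe_add_int_aux _ _
    rw [hcoe, dist_eq_norm, ← QuotientAddGroup.mk_sub]
    have : s - (s + (q₁ : ℝ) * (q₃ : ℝ) * δ) = -((q₁ : ℝ) * (q₃ : ℝ) * δ) := by ring
    rw [this, QuotientAddGroup.mk_neg, norm_neg]
    have hnorm : ‖(((q₁ : ℝ) * (q₃ : ℝ) * δ : ℝ) : AddCircle (1 : ℝ))‖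
        ≤ (q₁ : ℝ) * (q₃ : ℝ) * |δ| := by
      have := QuotientAddGroup.norm_mk_le_norm (S := AddSubgroup.zmultiples (1 : ℝ)) (m := (q₁ : ℝ) * (q₃ : ℝ) * δ)
      simpa using this
    have hCabs2 : (q₁ : ℝ) * (q₃ : ℝ) + 1 ≤ C := by
      rw [hCdef]; linarith [abs_nonneg ((q₃ : ℝ) * (p₁ : ℝ))]
    calc ‖(((q₁ : ℝ) * (q₃ : ℝ) * δ : ℝ) : AddCircle (1 : ℝ))‖
        ≤ (q₁ : ℝ) * (q₃ : ℝ) * |δ| := hnorm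
      _ ≤ (q₁ : ℝ) * (q₃ : ℝ) * (ε / C) :=
          mul_le_mul_of_nonneg_left hδε.le (by positivity)
      _ < C * (ε / C) := by
          apply mul_lt_mul_of_pos_right _ (div_pos hε hCpos)
          linarith [hCabs2]
      _ = ε := by field_simp
  · -- third coordinate
    have heq : (((m : ℝ) * α₂ : ℝ) : AddCircle (1 : ℝ))
        = (((r₂ : ℝ) * α₂ : ℝ) : AddCircle (1 : ℝ)) := by
      have hmα : (m : ℝ) * α₂ = (r₂ : ℝ) * α₂ + ((j * p₃ : ℤ) : ℝ) := by
        rw [hmR, hmzdef, hα₂eq]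
        push_cast
        field_simp
      rw [hmα]
      exact coe_add_int_aux _ _
    rw [heq, dist_self]
    exact hε
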